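/- Bloch eigenfunctions at the domain wall: Let Γ₀(x) = [[0, e^{−2ix}],[e^{2ix}, 0]]. Let λ, k ∈ ℂ satisfy k² = 4(1 + λ²), and define ψ: ℝ×ℝ → ℂ² by ψ(t,x) = e^{−iλkt} · ( 2λ e^{i(k−2)x/2}, (k−2) e^{i(k+2)x/2} ). Then ψ solves both equations of the Lax pair at (Γ₀, λ): ∂_x ψ = iλ Γ₀ ψ and ∂_t ψ = −(λ/2)(4iλ Γ₀ + [Γ₀, ∂_x Γ₀]) ψ. -/

import Mathlib

set_option maxRecDepth 10000
open Matrix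

noncomputable section

/-- The matrix of the domain wall `m = (cos 2x, sin 2x, 0)`:
`Γ₀(x) = [[0, e^{−2ix}],[e^{2ix}, 0]]`. -/
def Gamma0 (x : ℝ) : Matrix (Fin 2) (Fin 2) ℂ :=
  !![0, Complex.exp (-(2 * Complex.I * (x : ℂ)));
     Complex.exp (2 * Complex.I * (x : ℂ)), 0]

/-- Entrywise spatial derivative of `Γ₀`. -/
def Gamma0x (x : ℝ) : Matrix (Fin 2) (Fin 2) ℂ :=
  Matrix.of fun i j => deriv (fun y => Gamma0 y i j) x

/-- The Bloch eigenfunction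
`ψ(t,x) = e^{−iλkt} ( 2λ e^{i(k−2)x/2}, (k−2) e^{i(k+2)x/2} )`. -/
def blochPsi (lam k : ℂ) (t x : ℝ) : Fin 2 → ℂ :=
  Complex.exp (-(Complex.I * lam * k * (t : ℂ))) •
    ![2 * lam * Complex.exp (Complex.I * (k - 2) * (x : ℂ) / 2),
      (k - 2) * Complex.exp (Complex.I * (k + 2) * (x : ℂ) / 2)]

lemma hd_exp (a c : ℂ) (x : ℝ) :
    HasDerivAt (fun y : ℝ => a * Complex.exp (c * (y : ℂ)))
      (c * (a * Complex.exp (c * (x : ℂ)))) x := by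
  have h1 : HasDerivAt (fun y : ℝ => (y : ℂ)) 1 x := Complex.ofRealCLM.hasDerivAt
  have h2 := ((h1.const_mul c).cexp).const_mul a
  rw [show c * (a * Complex.exp (c * (x : ℂ))) = a * (Complex.exp (c * (x : ℂ)) * (c * 1)) by ring]
  exact h2

lemma Gamma0x_eq (x : ℝ) :
    Gamma0x x = !![0, -(2 * Complex.I) * Complex.exp (-(2 * Complex.I * (x : ℂ)));
      (2 * Complex.I) * Complex.exp (2 * Complex.I * (x : ℂ)), 0] := by
  ext i j
  fin_cases i <;> fin_cases j
  · show deriv (fun y => Gamma0 y 0 0) x = _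
    simp [Gamma0]
  · show deriv (fun y => Gamma0 y 0 1) x = _
    have h : (fun y : ℝ => Gamma0 y 0 1)
        = fun y : ℝ => (1:ℂ) * Complex.exp ((-(2 * Complex.I)) * (y : ℂ)) := by
      funext y; simp [Gamma0]
    rw [h, (hd_exp 1 (-(2 * Complex.I)) x).deriv]
    simp
  · show deriv (fun y => Gamma0 y 1 0) x = _
    have h : (fun y : ℝ => Gamma0 y 1 0)
        = fun y : ℝ => (1:ℂ) * Complex.exp ((2 * Complex.I) * (y : ℂ)) := by
      funext y; simp [Gamma0]
    rw [h, (hd_exp 1 (2 * Complex.I) x).deriv]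
    simp
  · show deriv (fun y => Gamma0 y 1 1) x = _
    simp [Gamma0]

lemma comm_eq (x : ℝ) : Gamma0 x * Gamma0x x - Gamma0x x * Gamma0 x
    = !![4 * Complex.I, 0; 0, -(4 * Complex.I)] := by
  have e0 : Complex.exp (-(2 * Complex.I * (x:ℂ))) * Complex.exp (2 * Complex.I * (x:ℂ)) = 1 := by
    rw [← Complex.exp_add]; norm_num
  have e0' : Complex.exp (2 * Complex.I * (x:ℂ)) * Complex.exp (-(2 * Complex.I * (x:ℂ))) = 1 := by
    rw [← Complex.exp_add]; norm_num
  rw [Gamma0x_eq]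
  ext i j
  fin_cases i <;> fin_cases j <;>
    simp [Gamma0, Matrix.mul_apply, Fin.sum_univ_two]
  · linear_combination (2 * Complex.I) * e0 + (2 * Complex.I) * e0
  · linear_combination (-2 * Complex.I) * e0' + (-2 * Complex.I) * e0'

/-- **Bloch eigenfunctions at the domain wall.**
If `k² = 4(1 + λ²)` then `ψ = blochPsi lam k` solves both equations of the Lax pair at
`(Γ₀, λ)`: `∂_x ψ = iλΓ₀ψ` and `∂_t ψ = −(λ/2)(4iλΓ₀ + [Γ₀, ∂_xΓ₀])ψ`. -/
theorem domain_wall_bloch_eigenfunctions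
    (lam k : ℂ) (hk : k ^ 2 = 4 * (1 + lam ^ 2)) :
    (∀ t x : ℝ, HasDerivAt (fun y => blochPsi lam k t y)
      (((Complex.I * lam) • Gamma0 x).mulVec (blochPsi lam k t x)) x) ∧
    (∀ t x : ℝ, HasDerivAt (fun s => blochPsi lam k s x)
      (((-(lam / 2)) • ((4 * Complex.I * lam) • Gamma0 x +
        (Gamma0 x * Gamma0x x - Gamma0x x * Gamma0 x))).mulVec (blochPsi lam k t x)) t) := by
  constructor
  · intro t x
    rw [hasDerivAt_pi]
    intro i
    set C := Complex.exp (-(Complex.I * lam * k * (t : ℂ))) with hC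
    fin_cases i
    · show HasDerivAt (fun y => blochPsi lam k t y 0)
        ((((Complex.I * lam) • Gamma0 x).mulVec (blochPsi lam k t x)) 0) x
      have h : (fun y : ℝ => blochPsi lam k t y 0)
          = fun y : ℝ => (C * (2 * lam)) * Complex.exp ((Complex.I * (k - 2) / 2) * (y : ℂ)) := by
        funext y; simp [blochPsi, hC]; ring_nf
      rw [h]
      convert hd_exp (C * (2 * lam)) (Complex.I * (k - 2) / 2) x using 1
      have e1 : Complex.exp (-(2 * Complex.I * (x:ℂ))) * Complex.exp (Complex.I * (k + 2) * (x:ℂ) / 2)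
          = Complex.exp (Complex.I * (k - 2) / 2 * (x:ℂ)) := by
        rw [← Complex.exp_add]; ring_nf
      simp [blochPsi, Gamma0, mulVec, dotProduct, Fin.sum_univ_two, ← hC]
      linear_combination (Complex.I * lam * C * (k - 2)) * e1
    · show HasDerivAt (fun y => blochPsi lam k t y 1)
        ((((Complex.I * lam) • Gamma0 x).mulVec (blochPsi lam k t x)) 1) x
      have h : (fun y : ℝ => blochPsi lam k t y 1)
          = fun y : ℝ => (C * (k - 2)) * Complex.exp ((Complex.I * (k + 2) / 2) * (y : ℂ)) := by
        funext y; simp [blochPsi, hC]; ring_nf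
      rw [h]
      convert hd_exp (C * (k - 2)) (Complex.I * (k + 2) / 2) x using 1
      have e2 : Complex.exp (2 * Complex.I * (x:ℂ)) * Complex.exp (Complex.I * (k - 2) * (x:ℂ) / 2)
          = Complex.exp (Complex.I * (k + 2) / 2 * (x:ℂ)) := by
        rw [← Complex.exp_add]; ring_nf
      simp [blochPsi, Gamma0, mulVec, dotProduct, Fin.sum_univ_two, ← hC]
      linear_combination (2 * Complex.I * lam ^ 2 * C) * e2
        - (Complex.I * C * Complex.exp (Complex.I * (k + 2) / 2 * (x:ℂ)) / 2) * hk
  · intro t x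
    rw [hasDerivAt_pi]
    intro i
    have hCt : (-(Complex.I * lam * k * (t:ℂ))) = (-(Complex.I * lam * k)) * (t:ℂ) := by ring
    fin_cases i
    · show HasDerivAt (fun s : ℝ => blochPsi lam k s x 0)
        (((-(lam / 2) • ((4 * Complex.I * lam) • Gamma0 x +
          (Gamma0 x * Gamma0x x - Gamma0x x * Gamma0 x))).mulVec (blochPsi lam k t x)) 0) t
      rw [comm_eq]
      have h : (fun s : ℝ => blochPsi lam k s x 0)
          = fun s : ℝ => (2 * lam * Complex.exp (Complex.I * (k - 2) * (x:ℂ) / 2))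
              * Complex.exp ((-(Complex.I * lam * k)) * (s : ℂ)) := by
        funext s; simp [blochPsi]; ring_nf
      rw [h]
      convert hd_exp (2 * lam * Complex.exp (Complex.I * (k - 2) * (x:ℂ) / 2)) (-(Complex.I * lam * k)) t using 1
      have e1 : Complex.exp (-(2 * Complex.I * (x:ℂ))) * Complex.exp (Complex.I * (k + 2) * (x:ℂ) / 2)
          = Complex.exp (Complex.I * (k - 2) * (x:ℂ) / 2) := by
        rw [← Complex.exp_add]; ring_nf
      simp only [blochPsi, Gamma0, mulVec, dotProduct, Fin.sum_univ_two, Matrix.smul_apply,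
        Matrix.add_apply, Pi.smul_apply, smul_eq_mul, Matrix.cons_val', Matrix.cons_val_zero,
        Matrix.cons_val_one, Matrix.head_cons, Matrix.empty_val', Matrix.cons_val_fin_one,
        Matrix.head_fin_const]
      norm_num
      rw [hCt]
      set E := Complex.exp ((-(Complex.I * lam * k)) * (t:ℂ))
      linear_combination (-2 * Complex.I * lam ^ 2 * (k - 2) * E) * e1
    · show HasDerivAt (fun s : ℝ => blochPsi lam k s x 1)
        (((-(lam / 2) • ((4 * Complex.I * lam) • Gamma0 x +
          (Gamma0 x * Gamma0x x - Gamma0x x * Gamma0 x))).mulVec (blochPsi lam k t x)) 1) t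
      rw [comm_eq]
      have h : (fun s : ℝ => blochPsi lam k s x 1)
          = fun s : ℝ => ((k - 2) * Complex.exp (Complex.I * (k + 2) * (x:ℂ) / 2))
              * Complex.exp ((-(Complex.I * lam * k)) * (s : ℂ)) := by
        funext s; simp [blochPsi]; ring_nf
      rw [h]
      convert hd_exp ((k - 2) * Complex.exp (Complex.I * (k + 2) * (x:ℂ) / 2)) (-(Complex.I * lam * k)) t using 1
      have e2 : Complex.exp (2 * Complex.I * (x:ℂ)) * Complex.exp (Complex.I * (k - 2) * (x:ℂ) / 2)
          = Complex.exp (Complex.I * (k + 2) * (x:ℂ) / 2) := by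
        rw [← Complex.exp_add]; ring_nf
      simp only [blochPsi, Gamma0, mulVec, dotProduct, Fin.sum_univ_two, Matrix.smul_apply,
        Matrix.add_apply, Pi.smul_apply, smul_eq_mul, Matrix.cons_val', Matrix.cons_val_zero,
        Matrix.cons_val_one, Matrix.head_cons, Matrix.empty_val', Matrix.cons_val_fin_one,
        Matrix.head_fin_const]
      norm_num
      rw [hCt]
      set E := Complex.exp ((-(Complex.I * lam * k)) * (t:ℂ))
      linear_combination (-4 * Complex.I * lam ^ 3 * E) * e2
        + (Complex.I * lam * E * Complex.exp (Complex.I * (k + 2) * (x:ℂ) / 2)) * hk
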